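/- Let G be a connected graph on n vertices with adjacency eigenvalues λ₁ ≥ ⋯ ≥ λₙ, λ = max{|λ₂|,|λₙ|}, and normalized Perron eigenvector ν with minimum entry ν_min. Then the zero forcing number satisfies Z(G) ≥ n(1 − 2λ/(n(λ + λ₁)ν_min²)). -/

import Mathlib

open Matrix Finset

/-- The zero forcing closure: black vertices starting from `S`, where a black
vertex `u` whose only white neighbour is `w` colors `w` black. -/
inductive ZfClosure {n : ℕ} (G : SimpleGraph (Fin n)) (S : Set (Fin n)) : Fin n → Prop
  | init (v : Fin n) (hv : v ∈ S) : ZfClosure G S v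
  | force (u w : Fin n) (hu : ZfClosure G S u) (hadj : G.Adj u w)
      (hothers : ∀ x, G.Adj u x → x ≠ w → ZfClosure G S x) : ZfClosure G S w

/-- The zero forcing number: the least size of a set of initially black vertices
whose zero forcing closure is the whole vertex set. -/
noncomputable def zeroForcingNumber {n : ℕ} (G : SimpleGraph (Fin n)) : ℕ :=
  sInf {k | ∃ S : Finset (Fin n), S.card = k ∧ ∀ v, ZfClosure G (↑S) v}

namespace ZFaux

theorem lt0 {n : ℕ} (hn : 2 ≤ n) : 0 < n := by omega
theorem lt1 {n : ℕ} (hn : 2 ≤ n) : 1 < n := by omega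
theorem ltl {n : ℕ} (hn : 2 ≤ n) : n - 1 < n := by omega

end ZFaux

namespace ZFaux


variable {n : ℕ} {A : Matrix (Fin n) (Fin n) ℝ}

/-- coordinates of a vector in the eigenbasis -/
noncomputable def coords (hAH : A.IsHermitian) (x : Fin n → ℝ) : Fin n → ℝ :=
  (hAH.eigenvectorUnitary : Matrix (Fin n) (Fin n) ℝ)ᵀ *ᵥ x

lemma star_coe_unit (hAH : A.IsHermitian) :
    star (hAH.eigenvectorUnitary : Matrix (Fin n) (Fin n) ℝ)
      = (hAH.eigenvectorUnitary : Matrix (Fin n) (Fin n) ℝ)ᵀ := by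
  rw [star_eq_conjTranspose, conjTranspose_eq_transpose_of_trivial]

lemma mul_transpose_self (hAH : A.IsHermitian) :
    (hAH.eigenvectorUnitary : Matrix (Fin n) (Fin n) ℝ)
      * (hAH.eigenvectorUnitary : Matrix (Fin n) (Fin n) ℝ)ᵀ = 1 := by
  rw [← star_coe_unit hAH]
  exact (Matrix.mem_unitaryGroup_iff).mp (hAH.eigenvectorUnitary).2

lemma transpose_mul_self (hAH : A.IsHermitian) :
    (hAH.eigenvectorUnitary : Matrix (Fin n) (Fin n) ℝ)ᵀ
      * (hAH.eigenvectorUnitary : Matrix (Fin n) (Fin n) ℝ) = 1 := by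
  rw [← star_coe_unit hAH]
  exact (Matrix.mem_unitaryGroup_iff').mp (hAH.eigenvectorUnitary).2

lemma coords_dot (hAH : A.IsHermitian) (x y : Fin n → ℝ) :
    coords hAH x ⬝ᵥ coords hAH y = x ⬝ᵥ y := by
  unfold coords
  rw [dotProduct_mulVec, vecMul_transpose, mulVec_mulVec, mul_transpose_self hAH, one_mulVec]

lemma spectral_real (hAH : A.IsHermitian) :
    A = (hAH.eigenvectorUnitary : Matrix (Fin n) (Fin n) ℝ)
        * diagonal hAH.eigenvalues
        * (hAH.eigenvectorUnitary : Matrix (Fin n) (Fin n) ℝ)ᵀ := by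
  rw [← star_coe_unit hAH]
  convert hAH.spectral_theorem using 1
  simp [Unitary.conjStarAlgAut_apply]

lemma coords_mulVec (hAH : A.IsHermitian) (y : Fin n → ℝ) :
    coords hAH (A *ᵥ y) = fun i => hAH.eigenvalues i * coords hAH y i := by
  have key : (hAH.eigenvectorUnitary : Matrix (Fin n) (Fin n) ℝ)ᵀ * A
      = diagonal hAH.eigenvalues * (hAH.eigenvectorUnitary : Matrix (Fin n) (Fin n) ℝ)ᵀ := by
    calc (hAH.eigenvectorUnitary : Matrix (Fin n) (Fin n) ℝ)ᵀ * A
        = (hAH.eigenvectorUnitary : Matrix (Fin n) (Fin n) ℝ)ᵀ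
          * ((hAH.eigenvectorUnitary : Matrix (Fin n) (Fin n) ℝ)
            * diagonal hAH.eigenvalues
            * (hAH.eigenvectorUnitary : Matrix (Fin n) (Fin n) ℝ)ᵀ) := by
          rw [← spectral_real hAH]
      _ = _ := by
          rw [← Matrix.mul_assoc, ← Matrix.mul_assoc, transpose_mul_self hAH, Matrix.one_mul]
  unfold coords
  rw [mulVec_mulVec, key, ← mulVec_mulVec]
  ext i
  rw [mulVec_diagonal]

lemma dot_mulVec_eq (hAH : A.IsHermitian) (x y : Fin n → ℝ) :
    x ⬝ᵥ (A *ᵥ y) = ∑ i, hAH.eigenvalues i * (coords hAH x i * coords hAH y i) := by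
  rw [← coords_dot hAH, coords_mulVec hAH]
  unfold dotProduct
  exact Finset.sum_congr rfl (fun i _ => by ring)


lemma dot_self_eq_sum_sq (x : Fin n → ℝ) : x ⬝ᵥ x = ∑ i, x i ^ 2 := by
  unfold dotProduct; exact Finset.sum_congr rfl fun i _ => (sq (x i)).symm

lemma eigen_le {n : ℕ} (hn : 2 ≤ n) {A : Matrix (Fin n) (Fin n) ℝ} (hAH : A.IsHermitian)
    (lam : Fin n → ℝ) (hmono : Antitone lam)
    (heig : ∃ e : Fin n ≃ Fin n, ∀ i, lam i = hAH.eigenvalues (e i)) :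
    ∀ i, lam ⟨n - 1, ltl hn⟩ ≤ hAH.eigenvalues i ∧ hAH.eigenvalues i ≤ lam ⟨0, lt0 hn⟩ := by
  obtain ⟨e, he⟩ := heig
  intro i
  have hi : hAH.eigenvalues i = lam (e.symm i) := by rw [he (e.symm i), e.apply_symm_apply]
  constructor
  · rw [hi]
    refine hmono ?_
    rw [Fin.le_def]
    have := (e.symm i).isLt
    show (e.symm i).val ≤ n - 1
    omega
  · rw [hi]
    refine hmono ?_
    rw [Fin.le_def]
    show 0 ≤ (e.symm i).val
    omega

lemma key_bound {n : ℕ} (hn : 2 ≤ n) {A : Matrix (Fin n) (Fin n) ℝ} (hAH : A.IsHermitian)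
    (lam : Fin n → ℝ) (hmono : Antitone lam)
    (heig : ∃ e : Fin n ≃ Fin n, ∀ i, lam i = hAH.eigenvalues (e i))
    (ν : Fin n → ℝ) (hνnorm : ∑ i, ν i ^ 2 = 1)
    (hνeig : A *ᵥ ν = lam ⟨0, lt0 hn⟩ • ν)
    (lamAbs : ℝ) (hlamAbs : lamAbs = max |lam ⟨1, lt1 hn⟩| |lam ⟨n - 1, ltl hn⟩|)
    (x : Fin n → ℝ) (hx : ν ⬝ᵥ x = 0) :
    ∀ i, |hAH.eigenvalues i * coords hAH x i| ≤ lamAbs * |coords hAH x i| := by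
  have hlamAbs0 : 0 ≤ lamAbs := hlamAbs ▸ le_trans (abs_nonneg _) (le_max_left _ _)
  have hcν : ∀ i, hAH.eigenvalues i * coords hAH ν i
      = lam ⟨0, by omega⟩ * coords hAH ν i := by
    intro i
    have h1 : coords hAH (A *ᵥ ν) = coords hAH (lam ⟨0, by omega⟩ • ν) := by rw [hνeig]
    rw [coords_mulVec hAH] at h1
    have h2 : coords hAH (lam ⟨0, by omega⟩ • ν) = lam ⟨0, by omega⟩ • coords hAH ν := by
      unfold coords; rw [mulVec_smul]
    rw [h2] at h1
    have := congrFun h1 i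
    simpa using this
  intro i
  by_cases h : |hAH.eigenvalues i| ≤ lamAbs
  · rw [abs_mul]
    exact mul_le_mul_of_nonneg_right h (abs_nonneg _)
  · push_neg at h
    obtain ⟨e, he⟩ := heig
    have hbounds := eigen_le hn hAH lam hmono ⟨e, he⟩
    -- μ i > lamAbs
    have hlow : -lamAbs ≤ hAH.eigenvalues i := by
      have h1 : -lamAbs ≤ lam ⟨n - 1, by omega⟩ := by
        rw [hlamAbs]
        have := neg_abs_le (lam ⟨n - 1, by omega⟩)
        have h2 : -(max |lam ⟨1, by omega⟩| |lam ⟨n - 1, by omega⟩|)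
            ≤ -|lam ⟨n - 1, by omega⟩| := by
          exact neg_le_neg (le_max_right _ _)
        linarith
      linarith [(hbounds i).1]
    have hpos : lamAbs < hAH.eigenvalues i := by
      rcases abs_cases (hAH.eigenvalues i) with ⟨habs, _⟩ | ⟨habs, _⟩
      · linarith
      · linarith
    have hgt1 : lam ⟨1, by omega⟩ < hAH.eigenvalues i := by
      have : |lam ⟨1, by omega⟩| ≤ lamAbs := hlamAbs ▸ le_max_left _ _
      calc lam ⟨1, by omega⟩ ≤ |lam ⟨1, by omega⟩| := le_abs_self _
        _ ≤ lamAbs := this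
        _ < _ := hpos
    have hi : hAH.eigenvalues i = lam (e.symm i) := by rw [he (e.symm i), e.apply_symm_apply]
    have hesymm : e.symm i = ⟨0, by omega⟩ := by
      by_contra hne
      have h1 : (⟨1, by omega⟩ : Fin n) ≤ e.symm i := by
        rw [Fin.le_def]
        have hv : (e.symm i).val ≠ 0 := fun hv => hne (Fin.ext hv)
        show 1 ≤ (e.symm i).val
        omega
      have := hmono h1
      rw [← hi] at this
      linarith
    -- coords of ν vanish off i
    have hcνzero : ∀ j, j ≠ i → coords hAH ν j = 0 := by
      intro j hj
      by_contra hcj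
      have hμj : hAH.eigenvalues j = lam ⟨0, by omega⟩ := by
        have := hcν j
        have h2 : (hAH.eigenvalues j - lam ⟨0, by omega⟩) * coords hAH ν j = 0 := by ring_nf; linarith [this]
        rcases mul_eq_zero.mp h2 with h3 | h3
        · linarith
        · exact absurd h3 hcj
      have hj' : e.symm j ≠ ⟨0, by omega⟩ := by
        intro hv; exact hj (by
          have : e.symm j = e.symm i := hv.trans hesymm.symm
          exact e.symm.injective this)
      have h1 : (⟨1, by omega⟩ : Fin n) ≤ e.symm j := by
        rw [Fin.le_def]
        have hv : (e.symm j).val ≠ 0 := fun hv => hj' (Fin.ext hv)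
        show 1 ≤ (e.symm j).val
        omega
      have h2 := hmono h1
      have hj2 : hAH.eigenvalues j = lam (e.symm j) := by rw [he (e.symm j), e.apply_symm_apply]
      rw [← hj2] at h2
      have := (hbounds i).2
      linarith
    have hcνi : coords hAH ν i ≠ 0 := by
      intro hz
      have hsum : coords hAH ν ⬝ᵥ coords hAH ν = 1 := by
        rw [coords_dot hAH, ← hνnorm, dot_self_eq_sum_sq]
      unfold dotProduct at hsum
      rw [Finset.sum_eq_single i (fun j _ hj => by rw [hcνzero j hj]; ring)
        (fun hi => absurd (Finset.mem_univ i) hi)] at hsum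
      rw [hz] at hsum
      norm_num at hsum
    have hcxi : coords hAH x i = 0 := by
      have h0 : coords hAH ν ⬝ᵥ coords hAH x = 0 := by rw [coords_dot hAH, hx]
      unfold dotProduct at h0
      rw [Finset.sum_eq_single i (fun j _ hj => by rw [hcνzero j hj]; ring)
        (fun hi => absurd (Finset.mem_univ i) hi)] at h0
      exact (mul_eq_zero.mp h0).resolve_left hcνi
    rw [hcxi]
    simp

lemma bilinear_bound {n : ℕ} (hn : 2 ≤ n) {A : Matrix (Fin n) (Fin n) ℝ} (hAH : A.IsHermitian)
    (lam : Fin n → ℝ) (hmono : Antitone lam)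
    (heig : ∃ e : Fin n ≃ Fin n, ∀ i, lam i = hAH.eigenvalues (e i))
    (ν : Fin n → ℝ) (hνnorm : ∑ i, ν i ^ 2 = 1)
    (hνeig : A *ᵥ ν = lam ⟨0, lt0 hn⟩ • ν)
    (lamAbs : ℝ) (hlamAbs : lamAbs = max |lam ⟨1, lt1 hn⟩| |lam ⟨n - 1, ltl hn⟩|)
    (x y : Fin n → ℝ) (hx : ν ⬝ᵥ x = 0) (hy : ν ⬝ᵥ y = 0) :
    |x ⬝ᵥ (A *ᵥ y)| ≤ lamAbs * (Real.sqrt (x ⬝ᵥ x) * Real.sqrt (y ⬝ᵥ y)) := by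
  have hlamAbs0 : 0 ≤ lamAbs := hlamAbs ▸ le_trans (abs_nonneg _) (le_max_left _ _)
  rw [dot_mulVec_eq hAH]
  set p := coords hAH x with hp
  set q := coords hAH y with hq
  have step1 : |∑ i, hAH.eigenvalues i * (p i * q i)| ≤ lamAbs * ∑ i, |p i| * |q i| := by
    calc |∑ i, hAH.eigenvalues i * (p i * q i)| ≤ ∑ i, |hAH.eigenvalues i * (p i * q i)| :=
          Finset.abs_sum_le_sum_abs _ _
      _ ≤ ∑ i, lamAbs * (|p i| * |q i|) := by
          apply Finset.sum_le_sum
          intro i _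
          have hk := key_bound hn hAH lam hmono heig ν hνnorm hνeig lamAbs hlamAbs x hx i
          calc |hAH.eigenvalues i * (p i * q i)| = |hAH.eigenvalues i * p i| * |q i| := by
                rw [← abs_mul]; ring_nf
            _ ≤ (lamAbs * |p i|) * |q i| := by
                exact mul_le_mul_of_nonneg_right hk (abs_nonneg _)
            _ = lamAbs * (|p i| * |q i|) := by ring
      _ = lamAbs * ∑ i, |p i| * |q i| := by rw [Finset.mul_sum]
  have cs : ∑ i, |p i| * |q i| ≤ Real.sqrt (x ⬝ᵥ x) * Real.sqrt (y ⬝ᵥ y) := by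
    have h1 : (∑ i, |p i| * |q i|) ^ 2 ≤ (∑ i, |p i| ^ 2) * (∑ i, |q i| ^ 2) :=
      Finset.sum_mul_sq_le_sq_mul_sq _ _ _
    have hpx : ∑ i, |p i| ^ 2 = x ⬝ᵥ x := by
      rw [← coords_dot hAH x x, dot_self_eq_sum_sq]
      exact Finset.sum_congr rfl fun i _ => sq_abs _
    have hqy : ∑ i, |q i| ^ 2 = y ⬝ᵥ y := by
      rw [← coords_dot hAH y y, dot_self_eq_sum_sq]
      exact Finset.sum_congr rfl fun i _ => sq_abs _
    rw [hpx, hqy] at h1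
    have hnn : (0:ℝ) ≤ ∑ i, |p i| * |q i| :=
      Finset.sum_nonneg fun i _ => mul_nonneg (abs_nonneg _) (abs_nonneg _)
    have hxx : (0:ℝ) ≤ x ⬝ᵥ x := by
      rw [dot_self_eq_sum_sq]; exact Finset.sum_nonneg fun i _ => sq_nonneg _
    have := Real.sqrt_le_sqrt h1
    rw [Real.sqrt_sq hnn, Real.sqrt_mul hxx] at this
    exact this
  calc |∑ i, hAH.eigenvalues i * (p i * q i)| ≤ lamAbs * ∑ i, |p i| * |q i| := step1
    _ ≤ lamAbs * (Real.sqrt (x ⬝ᵥ x) * Real.sqrt (y ⬝ᵥ y)) :=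
        mul_le_mul_of_nonneg_left cs hlamAbs0

lemma quad_lower {n : ℕ} (hn : 2 ≤ n) {A : Matrix (Fin n) (Fin n) ℝ} (hAH : A.IsHermitian)
    (lam : Fin n → ℝ) (hmono : Antitone lam)
    (heig : ∃ e : Fin n ≃ Fin n, ∀ i, lam i = hAH.eigenvalues (e i))
    (z : Fin n → ℝ) :
    lam ⟨n - 1, ltl hn⟩ * (z ⬝ᵥ z) ≤ z ⬝ᵥ (A *ᵥ z) := by
  have hb := eigen_le hn hAH lam hmono heig
  rw [dot_mulVec_eq hAH, ← coords_dot hAH z z]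
  unfold dotProduct
  rw [Finset.mul_sum]
  apply Finset.sum_le_sum
  intro i _
  have : 0 ≤ coords hAH z i * coords hAH z i := mul_self_nonneg _
  exact mul_le_mul_of_nonneg_right (hb i).1 this

lemma assembly {n : ℕ} (hn : 2 ≤ n) {A : Matrix (Fin n) (Fin n) ℝ} (hAH : A.IsHermitian)
    (lam : Fin n → ℝ) (hmono : Antitone lam)
    (heig : ∃ e : Fin n ≃ Fin n, ∀ i, lam i = hAH.eigenvalues (e i))
    (ν : Fin n → ℝ) (hνnorm : ∑ i, ν i ^ 2 = 1)
    (hνeig : A *ᵥ ν = lam ⟨0, lt0 hn⟩ • ν)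
    (lamAbs : ℝ) (hlamAbs : lamAbs = max |lam ⟨1, lt1 hn⟩| |lam ⟨n - 1, ltl hn⟩|)
    (hlam0 : 0 ≤ lam ⟨0, lt0 hn⟩)
    (x y : Fin n → ℝ) (r S E : ℝ) (hr : 0 ≤ r)
    (hax : r ≤ ν ⬝ᵥ x) (hay : r ≤ ν ⬝ᵥ y)
    (hxx : x ⬝ᵥ x ≤ S) (hyy : y ⬝ᵥ y ≤ S)
    (hE : x ⬝ᵥ (A *ᵥ y) ≤ E) :
    lam ⟨0, lt0 hn⟩ * r ^ 2 ≤ E + lamAbs * (S - r ^ 2) := by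
  have hAT : Aᵀ = A := by
    rw [← conjTranspose_eq_transpose_of_trivial]; exact hAH
  set lam0 := lam ⟨0, by omega⟩ with hlam0def
  set a := ν ⬝ᵥ x with hadef
  set b := ν ⬝ᵥ y with hbdef
  set x' := x - a • ν with hx'def
  set y' := y - b • ν with hy'def
  have hνν : ν ⬝ᵥ ν = 1 := by rw [dot_self_eq_sum_sq, hνnorm]
  have hνx' : ν ⬝ᵥ x' = 0 := by
    rw [hx'def, dotProduct_sub, dotProduct_smul, hνν, smul_eq_mul, mul_one, sub_self]
  have hνy' : ν ⬝ᵥ y' = 0 := by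
    rw [hy'def, dotProduct_sub, dotProduct_smul, hνν, smul_eq_mul, mul_one, sub_self]
  have hAν : ∀ w : Fin n → ℝ, ν ⬝ᵥ (A *ᵥ w) = lam0 * (ν ⬝ᵥ w) := by
    intro w
    rw [dotProduct_mulVec, ← mulVec_transpose, hAT, hνeig, smul_dotProduct, smul_eq_mul]
  have hAνr : ∀ w : Fin n → ℝ, w ⬝ᵥ (A *ᵥ ν) = lam0 * (ν ⬝ᵥ w) := by
    intro w
    rw [hνeig, dotProduct_smul, smul_eq_mul, dotProduct_comm]
  have t1 : x ⬝ᵥ (A *ᵥ (b • ν)) = lam0 * (a * b) := by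
    rw [mulVec_smul, dotProduct_smul, hAνr x, smul_eq_mul]; ring
  have t2 : (a • ν) ⬝ᵥ (A *ᵥ y) = lam0 * (a * b) := by
    rw [smul_dotProduct, hAν y, smul_eq_mul]; ring
  have t3 : (a • ν) ⬝ᵥ (A *ᵥ (b • ν)) = lam0 * (a * b) := by
    rw [smul_dotProduct, mulVec_smul, dotProduct_smul, hAν ν, hνν, smul_eq_mul, smul_eq_mul]
    ring
  have decomp : x ⬝ᵥ (A *ᵥ y) = lam0 * (a * b) + x' ⬝ᵥ (A *ᵥ y') := by
    have : x' ⬝ᵥ (A *ᵥ y') = x ⬝ᵥ (A *ᵥ y) - lam0 * (a * b) := by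
      rw [hx'def, hy'def, mulVec_sub, sub_dotProduct, dotProduct_sub, dotProduct_sub,
        t1, t2, t3]
      ring
    rw [this]; ring
  have habs : |x' ⬝ᵥ (A *ᵥ y')| ≤ lamAbs * (S - r ^ 2) := by
    have hb1 := bilinear_bound hn hAH lam hmono heig ν hνnorm hνeig lamAbs hlamAbs x' y' hνx' hνy'
    have hx'x' : x' ⬝ᵥ x' = x ⬝ᵥ x - a * a := by
      rw [hx'def, sub_dotProduct, dotProduct_sub, dotProduct_sub, smul_dotProduct,
        smul_dotProduct, dotProduct_smul, dotProduct_smul, hνν, dotProduct_comm x ν]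
      simp only [smul_eq_mul]
      ring
    have hy'y' : y' ⬝ᵥ y' = y ⬝ᵥ y - b * b := by
      rw [hy'def, sub_dotProduct, dotProduct_sub, dotProduct_sub, smul_dotProduct,
        smul_dotProduct, dotProduct_smul, dotProduct_smul, hνν, dotProduct_comm y ν]
      simp only [smul_eq_mul]
      ring
    have hra : r * r ≤ a * a := mul_self_le_mul_self hr hax
    have hrb : r * r ≤ b * b := mul_self_le_mul_self hr hay
    have hx'S : x' ⬝ᵥ x' ≤ S - r ^ 2 := by rw [hx'x']; nlinarith
    have hy'S : y' ⬝ᵥ y' ≤ S - r ^ 2 := by rw [hy'y']; nlinarith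
    have hx'0 : (0:ℝ) ≤ x' ⬝ᵥ x' := by
      rw [dot_self_eq_sum_sq]; exact Finset.sum_nonneg fun i _ => sq_nonneg _
    have hy'0 : (0:ℝ) ≤ y' ⬝ᵥ y' := by
      rw [dot_self_eq_sum_sq]; exact Finset.sum_nonneg fun i _ => sq_nonneg _
    have hSr : (0:ℝ) ≤ S - r ^ 2 := le_trans hx'0 hx'S
    have hs1 : Real.sqrt (x' ⬝ᵥ x') ≤ Real.sqrt (S - r ^ 2) := Real.sqrt_le_sqrt hx'S
    have hs2 : Real.sqrt (y' ⬝ᵥ y') ≤ Real.sqrt (S - r ^ 2) := Real.sqrt_le_sqrt hy'S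
    have hsq : Real.sqrt (x' ⬝ᵥ x') * Real.sqrt (y' ⬝ᵥ y') ≤ S - r ^ 2 := by
      calc Real.sqrt (x' ⬝ᵥ x') * Real.sqrt (y' ⬝ᵥ y')
          ≤ Real.sqrt (S - r ^ 2) * Real.sqrt (S - r ^ 2) :=
            mul_le_mul hs1 hs2 (Real.sqrt_nonneg _) (Real.sqrt_nonneg _)
        _ = S - r ^ 2 := Real.mul_self_sqrt hSr
    have hlamAbs0 : 0 ≤ lamAbs := hlamAbs ▸ le_trans (abs_nonneg _) (le_max_left _ _)
    calc |x' ⬝ᵥ (A *ᵥ y')| ≤ lamAbs * (Real.sqrt (x' ⬝ᵥ x') * Real.sqrt (y' ⬝ᵥ y')) := hb1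
      _ ≤ lamAbs * (S - r ^ 2) := mul_le_mul_of_nonneg_left hsq hlamAbs0
  have hab : r ^ 2 ≤ a * b := by
    have : r * r ≤ a * b := mul_le_mul hax hay hr (le_trans hr hax)
    nlinarith
  have h1 : lam0 * r ^ 2 ≤ lam0 * (a * b) := mul_le_mul_of_nonneg_left hab hlam0
  have h2 := abs_le.mp habs
  linarith [decomp ▸ hE]


end ZFaux

namespace ZFaux


variable {n : ℕ} {G : SimpleGraph (Fin n)}

lemma zf_mono {S T : Set (Fin n)} (hST : S ⊆ T) {v : Fin n} (h : ZfClosure G S v) :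
    ZfClosure G T v := by
  induction h with
  | init v hv => exact ZfClosure.init v (hST hv)
  | force u w hu hadj hothers ihu ihothers =>
      exact ZfClosure.force u w ihu hadj (fun x hx hxw => ihothers x hx hxw)

lemma zf_step {B : Finset (Fin n)} (hall : ∀ v, ZfClosure G (↑B) v) (hne : B ≠ Finset.univ) :
    ∃ u w, u ∈ B ∧ w ∉ B ∧ G.Adj u w ∧ ∀ x, G.Adj u x → x ≠ w → x ∈ B := by
  by_contra hcon
  push_neg at hcon
  have hsub : ∀ v, ZfClosure G (↑B) v → v ∈ B := by
    intro v hv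
    induction hv with
    | init v hv => exact hv
    | force u w hu hadj hothers ihu ihothers =>
        by_contra hw
        obtain ⟨x, hx1, hx2, hx3⟩ := hcon u w ihu hw hadj
        exact hx3 (ihothers x hx1 hx2)
  apply hne
  apply Finset.eq_univ_of_forall
  intro v
  exact hsub v (hall v)

lemma zf_seq (hn : 0 < n) : ∀ (N : ℕ) (B : Finset (Fin n)),
    (Finset.univ \ B).card = N → (∀ v, ZfClosure G (↑B) v) →
    ∃ u w : ℕ → Fin n,
      (∀ i, i < N → G.Adj (u i) (w i)) ∧
      (∀ i, i < N → w i ∉ B) ∧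
      (∀ i j, i < j → j < N → ¬ G.Adj (u i) (w j)) ∧
      (∀ i j, i ≤ j → j < N → u i ≠ w j) ∧
      (∀ i j, i < j → j < N → w i ≠ w j) := by
  intro N
  induction N with
  | zero =>
      intro B _ _
      exact ⟨fun _ => ⟨0, hn⟩, fun _ => ⟨0, hn⟩, by omega, by omega, by omega, by omega, by omega⟩
  | succ N ih =>
      intro B hcard hall
      have hne : B ≠ Finset.univ := by
        intro h
        rw [h, Finset.sdiff_self] at hcard
        simp at hcard
      obtain ⟨u0, w0, hu0B, hw0B, hadj0, hforce0⟩ := zf_step hall hne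
      set B' := insert w0 B with hB'
      have hcard' : (Finset.univ \ B').card = N := by
        rw [hB', Finset.sdiff_insert]
        rw [Finset.card_erase_of_mem (by simp [hw0B]), hcard]
        omega
      have hall' : ∀ v, ZfClosure G (↑B') v := by
        intro v
        apply zf_mono _ (hall v)
        intro x hx
        simp only [hB', Finset.coe_insert, Set.mem_insert_iff]
        right; exact hx
      obtain ⟨u', w', h1, h2, h3, h4, h5⟩ := ih B' hcard' hall'
      refine ⟨fun i => match i with | 0 => u0 | (i+1) => u' i,
              fun i => match i with | 0 => w0 | (i+1) => w' i, ?_, ?_, ?_, ?_, ?_⟩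
      · intro i hi
        match i with
        | 0 => exact hadj0
        | (i+1) => exact h1 i (by omega)
      · intro i hi
        match i with
        | 0 => exact hw0B
        | (i+1) =>
            intro hmem
            exact h2 i (by omega) (by rw [hB']; exact Finset.mem_insert_of_mem hmem)
      · intro i j hij hj
        match i, j with
        | 0, (j+1) =>
            intro hadj
            have hwB' : w' j ∉ B' := h2 j (by omega)
            by_cases hww : w' j = w0
            · exact hwB' (by rw [hww, hB']; exact Finset.mem_insert_self _ _)
            · exact hwB' (by rw [hB']; exact Finset.mem_insert_of_mem (hforce0 _ hadj hww))
        | (i+1), (j+1) => exact h3 i j (by omega) (by omega)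
      · intro i j hij hj
        match i, j with
        | 0, 0 =>
            show u0 ≠ w0
            intro h; rw [h] at hu0B; exact hw0B hu0B
        | 0, (j+1) =>
            show u0 ≠ w' j
            intro h
            have hwB' : w' j ∉ B' := h2 j (by omega)
            exact hwB' (by rw [← h, hB']; exact Finset.mem_insert_of_mem hu0B)
        | (i+1), (j+1) => exact h4 i j (by omega) (by omega)
      · intro i j hij hj
        match i, j with
        | 0, (j+1) =>
            show w0 ≠ w' j
            intro h
            have hwB' : w' j ∉ B' := h2 j (by omega)
            exact hwB' (by rw [← h, hB']; exact Finset.mem_insert_self _ _)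
        | (i+1), (j+1) => exact h5 i j (by omega) (by omega)


end ZFaux

namespace ZFaux
variable {n : ℕ}


lemma sum_single_apply (t : Finset ℕ) (f : ℕ → Fin n) (c : ℕ → ℝ) (v : Fin n) :
    (∑ i ∈ t, Pi.single (f i) (c i) : Fin n → ℝ) v = ∑ i ∈ t, if v = f i then c i else 0 := by
  rw [Finset.sum_apply]
  exact Finset.sum_congr rfl fun i _ => by rw [Pi.single_apply]

lemma dot_sum_single_right (z : Fin n → ℝ) (t : Finset ℕ) (f : ℕ → Fin n) (c : ℕ → ℝ) :
    z ⬝ᵥ (∑ i ∈ t, Pi.single (f i) (c i) : Fin n → ℝ) = ∑ i ∈ t, z (f i) * c i := by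
  unfold dotProduct
  calc ∑ v, z v * (∑ i ∈ t, Pi.single (f i) (c i) : Fin n → ℝ) v
      = ∑ v, ∑ i ∈ t, (if v = f i then z v * c i else 0) := by
        refine Finset.sum_congr rfl fun v _ => ?_
        rw [sum_single_apply, Finset.mul_sum]
        exact Finset.sum_congr rfl fun i _ => by rw [mul_ite, mul_zero]
    _ = ∑ i ∈ t, ∑ v, (if v = f i then z v * c i else 0) := Finset.sum_comm
    _ = ∑ i ∈ t, z (f i) * c i := by
        refine Finset.sum_congr rfl fun i _ => ?_
        rw [Finset.sum_ite_eq' Finset.univ (f i) (fun v => z v * c i)]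
        simp

lemma dot_sum_single_left (z : Fin n → ℝ) (t : Finset ℕ) (f : ℕ → Fin n) (c : ℕ → ℝ) :
    (∑ i ∈ t, Pi.single (f i) (c i) : Fin n → ℝ) ⬝ᵥ z = ∑ i ∈ t, c i * z (f i) := by
  rw [dotProduct_comm, dot_sum_single_right]
  exact Finset.sum_congr rfl fun i _ => mul_comm _ _



lemma even_arith (lam0 lamAbs mR νm : ℝ) (hm : 1 ≤ mR)
    (h : lam0 * (mR * νm) ^ 2 ≤ 0 + lamAbs * (mR - (mR * νm) ^ 2)) :
    2 * mR * ((lamAbs + lam0) * νm ^ 2) ≤ 2 * lamAbs := by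
  have hmpos : 0 < mR := by linarith
  have h2 : ((lamAbs + lam0) * νm ^ 2 * mR) * mR ≤ lamAbs * mR := by nlinarith [h]
  have h3 := le_of_mul_le_mul_right h2 hmpos
  nlinarith [h3]

lemma odd_arith (lam0 lamAbs mR νm : ℝ) (hm : 0 ≤ mR) (hl : 1 ≤ lamAbs)
    (h : lam0 * ((mR + 2⁻¹) * νm) ^ 2
        ≤ 4⁻¹ + lamAbs * ((mR + 4⁻¹) - ((mR + 2⁻¹) * νm) ^ 2)) :
    (2 * mR + 1) * ((lamAbs + lam0) * νm ^ 2) ≤ 2 * lamAbs := by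
  have hmpos : (0:ℝ) < mR + 2⁻¹ := by linarith
  have h2 : ((lamAbs + lam0) * νm ^ 2 * (mR + 2⁻¹)) * (mR + 2⁻¹)
      ≤ lamAbs * (mR + 2⁻¹) := by nlinarith [h, hl]
  have h3 := le_of_mul_le_mul_right h2 hmpos
  nlinarith [h3]


end ZFaux

/-- **Perron spectral lower bound on the zero forcing number**
(Theorem 25(ii) of the paper). -/
theorem zero_forcing_perron_bound {n : ℕ} (hn : 2 ≤ n)
    (G : SimpleGraph (Fin n)) [DecidableRel G.Adj] (hG : G.Connected)
    (A : Matrix (Fin n) (Fin n) ℝ) (hA : A = G.adjMatrix ℝ)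
    (hAH : A.IsHermitian)
    (lam : Fin n → ℝ) (hmono : Antitone lam)
    (heig : ∃ e : Fin n ≃ Fin n, ∀ i, lam i = hAH.eigenvalues (e i))
    (ν : Fin n → ℝ) (hνpos : ∀ i, 0 < ν i) (hνnorm : ∑ i, ν i ^ 2 = 1)
    (hνeig : A *ᵥ ν = lam ⟨0, by omega⟩ • ν)
    (lamAbs : ℝ)
    (hlamAbs : lamAbs = max |lam ⟨1, by omega⟩| |lam ⟨n - 1, by omega⟩|)
    (νmin : ℝ) (hνmin : IsLeast (Set.range ν) νmin) :
    (zeroForcingNumber G : ℝ) ≥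
      n * (1 - 2 * lamAbs / (n * (lamAbs + lam ⟨0, by omega⟩) * νmin ^ 2)) := by
  classical
  obtain ⟨i₀, hi₀⟩ := hνmin.1
  have hνminpos : 0 < νmin := hi₀ ▸ hνpos i₀
  have hνminle : ∀ i, νmin ≤ ν i := fun i => hνmin.2 ⟨i, rfl⟩
  -- an edge
  obtain ⟨a, b, hab⟩ : ∃ a b, G.Adj a b := by
    obtain ⟨p⟩ := hG.preconnected ⟨0, by omega⟩ ⟨1, by omega⟩
    cases p with
    | cons h _ => exact ⟨_, _, h⟩
  have hAentry : ∀ v w : Fin n, A v w = if G.Adj v w then (1:ℝ) else 0 := by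
    intro v w; rw [hA]; simp [SimpleGraph.adjMatrix_apply]
  -- lamAbs ≥ 1
  have hlamAbs1 : 1 ≤ lamAbs := by
    set z : Fin n → ℝ := Pi.single a 1 - Pi.single b 1 with hzdef
    have hzz : z ⬝ᵥ z = 2 := by
      rw [hzdef, sub_dotProduct, dotProduct_sub, dotProduct_sub, single_dotProduct,
        single_dotProduct, dotProduct_single, dotProduct_single]
      have h1 : (Pi.single b 1 : Fin n → ℝ) a = 0 := by
        rw [Pi.single_apply, if_neg hab.ne]
      have h2 : (Pi.single a 1 : Fin n → ℝ) b = 0 := by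
        rw [Pi.single_apply, if_neg hab.ne']
      have h3 : (Pi.single a 1 : Fin n → ℝ) a = 1 := by rw [Pi.single_apply, if_pos rfl]
      have h4 : (Pi.single b 1 : Fin n → ℝ) b = 1 := by rw [Pi.single_apply, if_pos rfl]
      simp only [h1, h2, h3, h4]; ring
    have hzAz : z ⬝ᵥ (A *ᵥ z) = -2 := by
      rw [hzdef, mulVec_sub, mulVec_single, mulVec_single, sub_dotProduct, dotProduct_sub,
        dotProduct_sub, single_dotProduct, single_dotProduct, single_dotProduct,
        single_dotProduct]
      simp only [mul_one, one_mul]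
      simp only [MulOpposite.op_one, one_smul, Matrix.col_apply]
      rw [hAentry a a, hAentry a b, hAentry b a, hAentry b b,
        if_neg (G.irrefl), if_pos hab, if_pos hab.symm, if_neg (G.irrefl)]
      ring
    have hq := ZFaux.quad_lower hn hAH lam hmono heig z
    rw [hzz, hzAz] at hq
    have hlammin : lam ⟨n - 1, by omega⟩ ≤ -1 := by linarith
    have : (1:ℝ) ≤ |lam ⟨n - 1, by omega⟩| := by
      rw [abs_of_nonpos (by linarith)]; linarith
    rw [hlamAbs]
    exact le_trans this (le_max_right _ _)
  have hlamAbs0 : (0:ℝ) ≤ lamAbs := by linarith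
  -- lam0 > 0
  have hlam0pos : 0 < lam ⟨0, by omega⟩ := by
    have hApos : 0 < (A *ᵥ ν) a := by
      rw [hA, SimpleGraph.adjMatrix_mulVec_apply]
      apply Finset.sum_pos
      · exact fun i _ => hνpos i
      · exact ⟨b, by rwa [SimpleGraph.mem_neighborFinset]⟩
    rw [hνeig] at hApos
    simp only [Pi.smul_apply, smul_eq_mul] at hApos
    have := hνpos a
    nlinarith
  -- zero forcing facts
  set Zn := zeroForcingNumber G with hZdef
  have hZmem : Zn ∈ {k | ∃ S : Finset (Fin n), S.card = k ∧ ∀ v, ZfClosure G (↑S) v} := by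
    rw [hZdef]
    apply Nat.sInf_mem
    exact ⟨(Finset.univ : Finset (Fin n)).card, Finset.univ, rfl,
      fun v => ZfClosure.init v (by simp)⟩
  obtain ⟨B₀, hB₀card, hB₀⟩ := hZmem
  have hZle : Zn ≤ n := by
    rw [← hB₀card]
    calc B₀.card ≤ (Finset.univ : Finset (Fin n)).card := Finset.card_le_univ _
      _ = n := by simp
  set k := n - Zn with hkdef
  have hkcard : (Finset.univ \ B₀).card = k := by
    rw [Finset.card_sdiff_of_subset (Finset.subset_univ _), hB₀card]
    simp [hkdef]
  -- the key inequality
  have hmain : (k:ℝ) * ((lamAbs + lam ⟨0, by omega⟩) * νmin ^ 2) ≤ 2 * lamAbs := by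
    rcases Nat.eq_zero_or_pos k with hk0 | hkpos
    · rw [hk0]
      simp
      linarith
    obtain ⟨u, w, h1, h2, h3, h4, h5⟩ := ZFaux.zf_seq (by omega) k B₀ hkcard hB₀
    have huinj : ∀ i j, i < k → j < k → i ≠ j → u i ≠ u j := by
      intro i j hi hj hij heq
      rcases Nat.lt_or_ge i j with h | h
      · exact (h3 i j h hj) (heq ▸ h1 j hj)
      · have hji : j < i := by omega
        exact (h3 j i hji hi) (heq ▸ h1 i hi)
    have hAuw : ∀ i j, i < j → j < k → A (u i) (w j) = 0 := by
      intro i j hij hj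
      rw [hAentry, if_neg (h3 i j hij hj)]
    rcases Nat.even_or_odd k with ⟨m, hm⟩ | ⟨m, hm⟩
    · -- even case : k = m + m
      have hm1 : 1 ≤ m := by omega
      have hmk : m ≤ k := by omega
      set x := ∑ i ∈ Finset.range m, (Pi.single (u i) (1:ℝ) : Fin n → ℝ) with hxdef
      set y := ∑ j ∈ Finset.Ico m k, (Pi.single (w j) (1:ℝ) : Fin n → ℝ) with hydef
      have hcardIco : (Finset.Ico m k).card = m := by rw [Nat.card_Ico]; omega
      have hνx : (m:ℝ) * νmin ≤ ν ⬝ᵥ x := by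
        rw [hxdef, ZFaux.dot_sum_single_right]
        calc (m:ℝ) * νmin = ∑ _i ∈ Finset.range m, νmin := by
              rw [Finset.sum_const, Finset.card_range, nsmul_eq_mul]
          _ ≤ ∑ i ∈ Finset.range m, ν (u i) * 1 :=
              Finset.sum_le_sum fun i _ => by rw [mul_one]; exact hνminle _
      have hνy : (m:ℝ) * νmin ≤ ν ⬝ᵥ y := by
        rw [hydef, ZFaux.dot_sum_single_right]
        calc (m:ℝ) * νmin = ∑ _j ∈ Finset.Ico m k, νmin := by
              rw [Finset.sum_const, hcardIco, nsmul_eq_mul]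
          _ ≤ ∑ j ∈ Finset.Ico m k, ν (w j) * 1 :=
              Finset.sum_le_sum fun j _ => by rw [mul_one]; exact hνminle _
      have hxx : x ⬝ᵥ x = (m:ℝ) := by
        rw [hxdef, ZFaux.dot_sum_single_left]
        have hval : ∀ i ∈ Finset.range m,
            (1:ℝ) * (∑ j ∈ Finset.range m, (Pi.single (u j) (1:ℝ) : Fin n → ℝ)) (u i)
              = 1 := by
          intro i hi
          rw [one_mul, ZFaux.sum_single_apply]
          rw [Finset.sum_eq_single i (fun j hj hji => by
              rw [if_neg]
              intro hval
              exact huinj i j (by simp at hi; omega) (by simp at hj; omega)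
                (Ne.symm hji) hval)
            (fun hni => absurd hi hni)]
          rw [if_pos rfl]
        rw [Finset.sum_congr rfl hval, Finset.sum_const, Finset.card_range, nsmul_eq_mul, mul_one]
      have hyy : y ⬝ᵥ y = (m:ℝ) := by
        rw [hydef, ZFaux.dot_sum_single_left]
        have hval : ∀ j ∈ Finset.Ico m k,
            (1:ℝ) * (∑ i ∈ Finset.Ico m k, (Pi.single (w i) (1:ℝ) : Fin n → ℝ)) (w j)
              = 1 := by
          intro j hj
          rw [one_mul, ZFaux.sum_single_apply]
          rw [Finset.sum_eq_single j (fun i hi hij => by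
              rw [if_neg]
              intro hval
              simp only [Finset.mem_Ico] at hi hj
              rcases Nat.lt_or_ge j i with hlt | hge
              · exact h5 j i hlt (by omega) hval
              · exact h5 i j (by omega) (by omega) hval.symm)
            (fun hnj => absurd hj hnj)]
          rw [if_pos rfl]
        rw [Finset.sum_congr rfl hval, Finset.sum_const, hcardIco, nsmul_eq_mul, mul_one]
      have hE : x ⬝ᵥ (A *ᵥ y) = 0 := by
        rw [dotProduct_mulVec, hydef, ZFaux.dot_sum_single_right]
        apply Finset.sum_eq_zero
        intro j hj
        simp only [Finset.mem_Ico] at hj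
        have hcol : (x ᵥ* A) (w j) = x ⬝ᵥ (fun r => A r (w j)) := rfl
        rw [hcol, hxdef, ZFaux.dot_sum_single_left]
        rw [Finset.sum_eq_zero fun i hi => by
          simp only [Finset.mem_range] at hi
          show (1:ℝ) * A (u i) (w j) = 0
          rw [hAuw i j (by omega) (by omega), mul_zero]]
        ring
      have hasm := ZFaux.assembly hn hAH lam hmono heig ν hνnorm hνeig lamAbs hlamAbs
        (le_of_lt hlam0pos) x y ((m:ℝ) * νmin) (m:ℝ) 0 (by positivity) hνx hνy
        (le_of_eq hxx) (le_of_eq hyy) (le_of_eq hE)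
      have hkR : (k:ℝ) = 2 * (m:ℝ) := by rw [hm]; push_cast; ring
      rw [hkR]
      have hmR : (1:ℝ) ≤ (m:ℝ) := by exact_mod_cast hm1
      exact ZFaux.even_arith _ _ _ _ hmR hasm
    · -- odd case : k = 2 * m + 1
      have hmk : m < k := by omega
      have hm1k : m + 1 ≤ k := by omega
      set c : ℕ → ℝ := fun i => if i = m then 2⁻¹ else 1 with hcdef
      have hc0 : ∀ i, 0 ≤ c i := by
        intro i; rw [hcdef]; dsimp only; split_ifs <;> norm_num
      set x := ∑ i ∈ Finset.range (m + 1), (Pi.single (u i) (c i) : Fin n → ℝ) with hxdef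
      set y := ∑ j ∈ Finset.Ico m k, (Pi.single (w j) (c j) : Fin n → ℝ) with hydef
      have hcm : c m = 2⁻¹ := by rw [hcdef]; simp
      have hcne : ∀ i, i ≠ m → c i = 1 := by
        intro i hi; rw [hcdef]; simp [hi]
      have sumc_t : ∑ i ∈ Finset.range (m + 1), c i = (m:ℝ) + 2⁻¹ := by
        rw [Finset.sum_range_succ, hcm,
          Finset.sum_congr rfl (fun i hi => hcne i (by simp at hi; omega)),
          Finset.sum_const, Finset.card_range, nsmul_eq_mul, mul_one]
      have sumc_s : ∑ j ∈ Finset.Ico m k, c j = (m:ℝ) + 2⁻¹ := by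
        rw [Finset.sum_eq_sum_Ico_succ_bot hmk, hcm,
          Finset.sum_congr rfl (fun j hj => hcne j (by simp at hj; omega)),
          Finset.sum_const, Nat.card_Ico, nsmul_eq_mul, mul_one]
        have : k - (m + 1) = m := by omega
        rw [this]; ring
      have sumc2_t : ∑ i ∈ Finset.range (m + 1), c i * c i = (m:ℝ) + 4⁻¹ := by
        rw [Finset.sum_range_succ, hcm,
          Finset.sum_congr rfl (fun i hi => by
            rw [hcne i (by simp at hi; omega), mul_one]),
          Finset.sum_const, Finset.card_range, nsmul_eq_mul, mul_one]
        norm_num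
      have sumc2_s : ∑ j ∈ Finset.Ico m k, c j * c j = (m:ℝ) + 4⁻¹ := by
        rw [Finset.sum_eq_sum_Ico_succ_bot hmk, hcm,
          Finset.sum_congr rfl (fun j hj => by
            rw [hcne j (by simp at hj; omega), mul_one]),
          Finset.sum_const, Nat.card_Ico, nsmul_eq_mul, mul_one]
        have : k - (m + 1) = m := by omega
        rw [this]
        norm_num
        ring
      have hνx : ((m:ℝ) + 2⁻¹) * νmin ≤ ν ⬝ᵥ x := by
        rw [hxdef, ZFaux.dot_sum_single_right]
        calc ((m:ℝ) + 2⁻¹) * νmin = ∑ i ∈ Finset.range (m + 1), νmin * c i := by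
              rw [← Finset.mul_sum, sumc_t]; ring
          _ ≤ ∑ i ∈ Finset.range (m + 1), ν (u i) * c i :=
              Finset.sum_le_sum fun i _ => mul_le_mul_of_nonneg_right (hνminle _) (hc0 i)
      have hνy : ((m:ℝ) + 2⁻¹) * νmin ≤ ν ⬝ᵥ y := by
        rw [hydef, ZFaux.dot_sum_single_right]
        calc ((m:ℝ) + 2⁻¹) * νmin = ∑ j ∈ Finset.Ico m k, νmin * c j := by
              rw [← Finset.mul_sum, sumc_s]; ring
          _ ≤ ∑ j ∈ Finset.Ico m k, ν (w j) * c j :=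
              Finset.sum_le_sum fun j _ => mul_le_mul_of_nonneg_right (hνminle _) (hc0 j)
      have hxx : x ⬝ᵥ x = (m:ℝ) + 4⁻¹ := by
        rw [hxdef, ZFaux.dot_sum_single_left]
        have hval : ∀ i ∈ Finset.range (m + 1),
            c i * (∑ j ∈ Finset.range (m + 1), (Pi.single (u j) (c j) : Fin n → ℝ)) (u i)
              = c i * c i := by
          intro i hi
          rw [ZFaux.sum_single_apply]
          congr 1
          rw [Finset.sum_eq_single i (fun j hj hji => by
              rw [if_neg]
              intro hval
              exact huinj i j (by simp at hi; omega) (by simp at hj; omega)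
                (Ne.symm hji) hval)
            (fun hni => absurd hi hni)]
          rw [if_pos rfl]
        rw [Finset.sum_congr rfl hval, sumc2_t]
      have hyy : y ⬝ᵥ y = (m:ℝ) + 4⁻¹ := by
        rw [hydef, ZFaux.dot_sum_single_left]
        have hval : ∀ j ∈ Finset.Ico m k,
            c j * (∑ i ∈ Finset.Ico m k, (Pi.single (w i) (c i) : Fin n → ℝ)) (w j)
              = c j * c j := by
          intro j hj
          rw [ZFaux.sum_single_apply]
          congr 1
          rw [Finset.sum_eq_single j (fun i hi hij => by
              rw [if_neg]
              intro hval
              simp only [Finset.mem_Ico] at hi hj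
              rcases Nat.lt_or_ge j i with hlt | hge
              · exact h5 j i hlt (by omega) hval
              · exact h5 i j (by omega) (by omega) hval.symm)
            (fun hnj => absurd hj hnj)]
          rw [if_pos rfl]
        rw [Finset.sum_congr rfl hval, sumc2_s]
      have hE : x ⬝ᵥ (A *ᵥ y) = 4⁻¹ := by
        rw [dotProduct_mulVec, hydef, ZFaux.dot_sum_single_right]
        have hcol : ∀ j, (x ᵥ* A) (w j) = x ⬝ᵥ (fun r => A r (w j)) := fun j => rfl
        rw [Finset.sum_eq_single m (fun j hj hjm => by
            simp only [Finset.mem_Ico] at hj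
            rw [hcol j, hxdef, ZFaux.dot_sum_single_left]
            rw [Finset.sum_eq_zero fun i hi => by
              simp only [Finset.mem_range] at hi
              show c i * A (u i) (w j) = 0
              rw [hAuw i j (by omega) (by omega), mul_zero]]
            ring)
          (fun hnm => absurd (Finset.mem_Ico.mpr ⟨le_refl m, hmk⟩) hnm)]
        rw [hcol m, hxdef, ZFaux.dot_sum_single_left]
        rw [Finset.sum_eq_single m (fun i hi him => by
            simp only [Finset.mem_range] at hi
            show c i * A (u i) (w m) = 0
            rw [hAuw i m (by omega) (by omega), mul_zero])
          (fun hnm => absurd (Finset.mem_range.mpr (by omega)) hnm)]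
        show c m * A (u m) (w m) * c m = 4⁻¹
        rw [hcm, hAentry, if_pos (h1 m (by omega))]
        norm_num
      have hasm := ZFaux.assembly hn hAH lam hmono heig ν hνnorm hνeig lamAbs hlamAbs
        (le_of_lt hlam0pos) x y (((m:ℝ) + 2⁻¹) * νmin) ((m:ℝ) + 4⁻¹) 4⁻¹ (by positivity)
        hνx hνy (le_of_eq hxx) (le_of_eq hyy) (le_of_eq hE)
      have hkR : (k:ℝ) = 2 * (m:ℝ) + 1 := by rw [hm]; push_cast; ring
      rw [hkR]
      exact ZFaux.odd_arith _ _ _ _ (Nat.cast_nonneg m) hlamAbs1 hasm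
  -- final algebra
  have hDpos : 0 < (lamAbs + lam ⟨0, by omega⟩) * νmin ^ 2 := by positivity
  have hnpos : (0:ℝ) < n := by
    have : (2:ℝ) ≤ n := by exact_mod_cast hn
    linarith
  have hkcast : (k:ℝ) = (n:ℝ) - (Zn:ℝ) := by
    rw [hkdef]
    push_cast [Nat.cast_sub hZle]
    ring
  have hfrac : (k:ℝ) ≤ 2 * lamAbs / ((lamAbs + lam ⟨0, by omega⟩) * νmin ^ 2) :=
    (le_div_iff₀ hDpos).mpr hmain
  have hrw : (n:ℝ) * (1 - 2 * lamAbs / ((n:ℝ) * (lamAbs + lam ⟨0, by omega⟩) * νmin ^ 2))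
      = (n:ℝ) - 2 * lamAbs / ((lamAbs + lam ⟨0, by omega⟩) * νmin ^ 2) := by
    field_simp
  rw [ge_iff_le, hrw]
  linarith
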